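/- Let 0 < α ≤ (1/2)·arccos(2/3). Set γ̄ = arccos(2/3) − 2α and β̄ = arccos((3/4)·cos(γ̄)) − α. Then, with w = sin(α)/sin(α + β̄), y = sin(β̄)/sin(α + β̄), d = y·sin(2α)/sin(2α + γ̄), x = y·sin(γ̄)/sin(2α + γ̄), one has w + (3/4)·d + (1/2)·x = cos(β̄). -/

import Mathlib

open Real

theorem stmt11 (α : ℝ) (h1 : 0 < α) (h2 : α ≤ 1 / 2 * arccos (2 / 3)) :
    let γ := arccos (2 / 3) - 2 * α
    let β := arccos (3 / 4 * cos γ) - α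
    let w := sin α / sin (α + β)
    let y := sin β / sin (α + β)
    let d := y * sin (2 * α) / sin (2 * α + γ)
    let x := y * sin γ / sin (2 * α + γ)
    w + 3 / 4 * d + 1 / 2 * x = cos β := by
  intro γ β w y d x
  have hγ : γ = arccos (2 / 3) - 2 * α := rfl
  have hβ : β = arccos (3 / 4 * cos γ) - α := rfl
  have hcγ1 : (-1 : ℝ) ≤ 3 / 4 * cos γ := by nlinarith [neg_one_le_cos γ]
  have hcγ2 : 3 / 4 * cos γ ≤ 1 := by nlinarith [cos_le_one γ]
  have hab : α + β = arccos (3 / 4 * cos γ) := by rw [hβ]; ring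
  have e1 : cos (α + β) = 3 / 4 * cos γ := by
    rw [hab, cos_arccos hcγ1 hcγ2]
  have hSpos : 0 < sin (α + β) := by
    rw [hab, sin_arccos]
    have h : (0:ℝ) < 1 - (3 / 4 * cos γ) ^ 2 := by
      nlinarith [neg_one_le_cos γ, cos_le_one γ]
    exact Real.sqrt_pos.mpr h
  have hc : 2 * α + γ = arccos (2 / 3) := by rw [hγ]; ring
  have e2 : cos (2 * α + γ) = 2 / 3 := by
    rw [hc, cos_arccos] <;> norm_num
  have hTpos : 0 < sin (2 * α + γ) := by
    rw [hc, sin_arccos]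
    have h : (0:ℝ) < 1 - (2 / 3 : ℝ) ^ 2 := by norm_num
    exact Real.sqrt_pos.mpr h
  have hS : sin (α + β) ≠ 0 := hSpos.ne'
  have hT : sin (2 * α + γ) ≠ 0 := hTpos.ne'
  have key : sin α * sin (2 * α + γ) + 3 / 4 * (sin β * sin (2 * α))
      + 1 / 2 * (sin β * sin γ) = cos β * (sin (α + β) * sin (2 * α + γ)) := by
    rw [cos_add] at e1
    rw [show (2:ℝ) * α + γ = α + α + γ from by ring] at e2 ⊢
    rw [show (2:ℝ) * α = α + α from by ring]
    simp only [sin_add, cos_add] at e2 ⊢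
    linear_combination
      (-(sin α * cos α + cos α * sin α) * cos γ - (cos α * cos α - sin α * sin α) * sin γ)
          * sin β * e1
      + (-(sin α * cos α + cos α * sin α) * cos γ - (cos α * cos α - sin α * sin α) * sin γ)
          * sin α * sin_sq_add_cos_sq β
      + (-(3:ℝ) / 4 * sin β * sin γ) * e2
      + (-(3:ℝ) / 2 * sin α * cos α * sin β) * sin_sq_add_cos_sq γ
  show sin α / sin (α + β) + 3 / 4 * (sin β / sin (α + β) * sin (2 * α) / sin (2 * α + γ))
      + 1 / 2 * (sin β / sin (α + β) * sin γ / sin (2 * α + γ)) = cos β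
  calc sin α / sin (α + β) + 3 / 4 * (sin β / sin (α + β) * sin (2 * α) / sin (2 * α + γ))
      + 1 / 2 * (sin β / sin (α + β) * sin γ / sin (2 * α + γ))
      = cos β * (sin (α + β) * sin (2 * α + γ)) / (sin (α + β) * sin (2 * α + γ)) := by
        rw [← key]; field_simp; ring_nf; field_simp [show sin (α * 2 + γ) ≠ 0 by rw [mul_comm]; exact hT]
    _ = cos β := mul_div_cancel_right₀ _ (mul_ne_zero hS hT)
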